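/- Let 𝒮 be a finite type, C a subset of 𝒮, ℛ a finite type, e : ℛ ≃ C a bijection, and 𝕊 : Matrix 𝒮 ℛ ℝ a matrix such that the square submatrix A : Matrix C C ℝ, A c c' = 𝕊 c (e.symm c'), is invertible. Let M : Matrix 𝒮 C ℝ be M = (𝕊.submatrix id e.symm) * A⁻¹. Then the image, under the coordinate-restriction map (𝒮 → ℝ) → (C → ℝ), of the convex cone generated by the columns of M equals the nonnegative orthant {u : C → ℝ | u c ≥ 0 for all c ∈ C}. -/
import Mathlib


open Matrix

/-- Theorem: the restriction of the species-productive cone of a minimal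
autocatalytic subnetwork to its core species `C` is the nonnegative orthant:
the image, under coordinate restriction to `C`, of the convex cone generated
by the columns of `M = 𝕊 · (𝕊_C)⁻¹` is `{u : C → ℝ | ∀ c, 0 ≤ u c}`. -/
theorem speciesProductiveCone_restrict_core {𝒮 ℛ : Type*}
    [Fintype 𝒮] [DecidableEq 𝒮] [Fintype ℛ]
    (C : Finset 𝒮) (e : ℛ ≃ C) (𝕊 : Matrix 𝒮 ℛ ℝ)
    (A : Matrix C C ℝ) (hA : A = Matrix.of fun c c' => 𝕊 c.1 (e.symm c'))
    (hAunit : IsUnit A)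
    (M : Matrix 𝒮 C ℝ)
    (hM : M = (𝕊.submatrix id (fun c : C => (e.symm c : ℛ))) * A⁻¹) :
    (fun w : 𝒮 → ℝ => fun c : C => w c.1) ''
        {w : 𝒮 → ℝ | ∃ a : C → ℝ, (∀ c, 0 ≤ a c) ∧ w = M.mulVec a}
      = {u : C → ℝ | ∀ c, 0 ≤ u c} := by
  have hdet : IsUnit A.det := (Matrix.isUnit_iff_isUnit_det A).mp hAunit
  have hrow : ∀ (c c' : C), M c.1 c' = (1 : Matrix C C ℝ) c c' := by
    intro c c'
    have : M c.1 c' = (A * A⁻¹) c c' := by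
      simp [hM, Matrix.mul_apply, hA, Matrix.submatrix_apply]
    rw [this, Matrix.mul_nonsing_inv A hdet]
  have hrest : ∀ a : C → ℝ, (fun c : C => (M.mulVec a) c.1) = a := by
    intro a
    funext c
    have : (M.mulVec a) c.1 = ∑ c', (1 : Matrix C C ℝ) c c' * a c' := by
      simp only [Matrix.mulVec, dotProduct]
      exact Finset.sum_congr rfl fun c' _ => by rw [hrow c c']
    rw [this]
    simp [Matrix.one_apply]
  ext u
  constructor
  · rintro ⟨w, ⟨a, ha, rfl⟩, rfl⟩
    intro c
    show (0:ℝ) ≤ (M *ᵥ a) c.1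
    rw [congrFun (hrest a) c]
    exact ha c
  · intro hu
    exact ⟨M.mulVec u, ⟨u, hu, rfl⟩, hrest u⟩
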